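/- Let p be an odd prime, r a generator of (ℤ/pℤ)ˣ, m = (p−1)/2, ω = e^{2πi/p}, λ an integer with λ(r−1) ≡ 1 (mod p), and α = ∏_{k=0}^{m−1}(1 − ω^{r^k}). Then (ω^λ α)² = (−1)^m p. -/

import Mathlib

open Complex Finset

theorem omega_lambda_alpha_sq_eq_neg_one_pow_mul_p
    (p : ℕ) (hp : p.Prime) (hodd : Odd p)
    (r : ℕ) (hr : orderOf ((r : ZMod p)) = p - 1)
    (ω : ℂ) (hω : ω = Complex.exp (2 * Real.pi * Complex.I / p))
    (lam : ℤ) (hlam : lam * ((r : ℤ) - 1) ≡ 1 [ZMOD (p : ℤ)])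
    (α : ℂ) (hα : α = ∏ k ∈ Finset.range ((p - 1) / 2), (1 - ω ^ (r ^ k))) :
    (ω ^ lam * α) ^ 2 = (-1) ^ ((p - 1) / 2) * (p : ℂ) := by
  haveI : Fact p.Prime := ⟨hp⟩
  have hp0 : 0 < p := hp.pos
  have hpne : (p : ℕ) ≠ 0 := hp.ne_zero
  have hprim : IsPrimitiveRoot ω p := by
    rw [hω]; exact Complex.isPrimitiveRoot_exp p hpne
  have hω0 : ω ≠ 0 := by
    intro h
    have := hprim.pow_eq_one
    rw [h, zero_pow hpne] at this
    exact zero_ne_one this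
  set m := (p - 1) / 2 with hm
  have hp3 : 3 ≤ p := by
    have := hp.two_le
    rcases Nat.lt_or_ge p 3 with h | h
    · interval_cases p
      · exact absurd hodd (by norm_num)
    · exact h
  have hmm : m + m = p - 1 := by
    obtain ⟨t, ht⟩ := hodd
    omega
  have hm1 : 1 ≤ m := by omega
  have hrprim : IsPrimitiveRoot ((r : ZMod p)) (p - 1) := by
    rw [← hr]; exact IsPrimitiveRoot.orderOf _
  -- congruent integer exponents give equal zpowers of ω
  have hcong : ∀ a b : ℤ, ((a : ZMod p) = (b : ZMod p)) → ω ^ a = ω ^ b := by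
    intro a b h
    have hd : (p : ℤ) ∣ b - a := ((ZMod.intCast_eq_intCast_iff a b p).mp h).dvd
    have h1 : ω ^ (b - a) = 1 := (hprim.zpow_eq_one_iff_dvd _).mpr hd
    rw [zpow_sub₀ hω0, div_eq_one_iff_eq (zpow_ne_zero _ hω0)] at h1
    exact h1.symm
  -- r is nonzero mod p
  have hcong' : ∀ a b : ℤ, ω ^ a = ω ^ b → ((a : ZMod p) = (b : ZMod p)) := by
    intro a b h
    have h1 : ω ^ (a - b) = 1 := by
      rw [zpow_sub₀ hω0, h, div_self (zpow_ne_zero _ hω0)]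
    have hd := (hprim.zpow_eq_one_iff_dvd _).mp h1
    have : b ≡ a [ZMOD (p : ℤ)] := (Int.modEq_iff_dvd).mpr hd
    exact ((ZMod.intCast_eq_intCast_iff _ _ _).mpr this).symm
  have hrne : ((r : ZMod p)) ≠ 0 := by
    intro h
    have h1 := hrprim.pow_eq_one
    rw [h, zero_pow (by omega : p - 1 ≠ 0)] at h1
    exact zero_ne_one h1
  -- Step A: full product is p
  have hA : ∏ k ∈ Finset.range (p - 1), (1 - ω ^ (r ^ k)) = (p : ℂ) := by
    classical
    set T : Finset ℂ := (Polynomial.nthRootsFinset p (1 : ℂ)).erase 1 with hT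
    -- the geometric sum polynomial factors over T
    have hfact : (∑ i ∈ Finset.range p, (Polynomial.X : Polynomial ℂ) ^ i)
        = ∏ ζ ∈ T, (Polynomial.X - Polynomial.C ζ) := by
      have h1mem : (1 : ℂ) ∈ Polynomial.nthRootsFinset p (1 : ℂ) :=
        Polynomial.one_mem_nthRootsFinset hp0
      have hXne : (Polynomial.X - Polynomial.C (1 : ℂ)) ≠ 0 := Polynomial.X_sub_C_ne_zero 1
      apply mul_left_cancel₀ hXne
      calc (Polynomial.X - Polynomial.C (1:ℂ)) * ∑ i ∈ Finset.range p, (Polynomial.X : Polynomial ℂ) ^ i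
          = Polynomial.X ^ p - 1 := by
            rw [mul_comm, Polynomial.C_1, geom_sum_mul]
        _ = ∏ ζ ∈ Polynomial.nthRootsFinset p (1 : ℂ), (Polynomial.X - Polynomial.C ζ) :=
            Polynomial.X_pow_sub_one_eq_prod hp0 hprim
        _ = (Polynomial.X - Polynomial.C (1:ℂ)) * ∏ ζ ∈ T, (Polynomial.X - Polynomial.C ζ) :=
            (Finset.mul_prod_erase _ _ h1mem).symm
    -- evaluate at 1
    have heval : (p : ℂ) = ∏ ζ ∈ T, (1 - ζ) := by
      have := congrArg (Polynomial.eval (1 : ℂ)) hfact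
      simpa [Polynomial.eval_prod, Polynomial.eval_finset_sum] using this
    -- the map k ↦ ω ^ (r ^ k) is a bijection from range (p-1) to T
    have hinj : Set.InjOn (fun k => ω ^ (r ^ k)) (Finset.range (p - 1)) := by
      intro i hi j hj hij
      simp only [Finset.coe_range, Set.mem_Iio] at hi hj
      have hij' : ω ^ (r ^ i) = ω ^ (r ^ j) := hij
      have hz := hcong' ((r ^ i : ℕ) : ℤ) ((r ^ j : ℕ) : ℤ) (by
        rw [zpow_natCast, zpow_natCast]; exact hij')
      have : ((r : ZMod p)) ^ i = ((r : ZMod p)) ^ j := by push_cast at hz; exact hz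
      exact hrprim.pow_inj hi hj this
    have hmem : ∀ k ∈ Finset.range (p - 1), ω ^ (r ^ k) ∈ T := by
      intro k _
      rw [hT, Finset.mem_erase]
      constructor
      · intro h1
        have hd := (hprim.pow_eq_one_iff_dvd _).mp h1
        have hdr : p ∣ r := hp.dvd_of_dvd_pow hd
        exact hrne ((ZMod.natCast_eq_zero_iff _ _).mpr hdr)
      · rw [Polynomial.mem_nthRootsFinset hp0, ← pow_mul, mul_comm, pow_mul, hprim.pow_eq_one,
          one_pow]
    have himage : Finset.image (fun k => ω ^ (r ^ k)) (Finset.range (p - 1)) = T := by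
      apply Finset.eq_of_subset_of_card_le
      · intro x hx
        obtain ⟨k, hk, rfl⟩ := Finset.mem_image.mp hx
        exact hmem k hk
      · rw [Finset.card_image_of_injOn hinj, Finset.card_range, hT,
          Finset.card_erase_of_mem (Polynomial.one_mem_nthRootsFinset hp0),
          hprim.card_nthRootsFinset]
    rw [heval, ← himage, Finset.prod_image (fun a ha b hb => hinj ha hb)]
  -- split the full product
  have hsplit : (p : ℂ) = α * ∏ k ∈ Finset.range m, (1 - ω ^ (r ^ (m + k))) := by
    rw [← hA, ← hmm, Finset.prod_range_add, hα]
  -- r ^ m = -1 in ZMod p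
  have hrm : ((r : ZMod p)) ^ m = -1 := by
    have hsq : (((r : ZMod p)) ^ m) ^ 2 = 1 := by
      rw [← pow_mul]
      have : m * 2 = p - 1 := by omega
      rw [this, ← hr, pow_orderOf_eq_one]
    have hne1 : ((r : ZMod p)) ^ m ≠ 1 := by
      intro h
      have hdvd := hrprim.pow_eq_one_iff_dvd m |>.mp h
      have := Nat.le_of_dvd (by omega) hdvd
      omega
    have : (((r : ZMod p)) ^ m - 1) * (((r : ZMod p)) ^ m + 1) = 0 := by
      linear_combination hsq
    rcases mul_eq_zero.mp this with h | h
    · exact absurd (by linear_combination h) hne1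
    · linear_combination h
  -- second half: 1 - ω^(r^(m+k)) = -ω^(-(r^k : ℤ)) * (1 - ω^(r^k))
  have hhalf : ∀ k : ℕ, (1 - ω ^ (r ^ (m + k)))
      = -(ω ^ (-(r ^ k : ℤ))) * (1 - ω ^ (r ^ k)) := by
    intro k
    have h1 : ω ^ ((r ^ (m + k) : ℕ) : ℤ) = ω ^ (-(r ^ k : ℤ)) := by
      apply hcong
      push_cast
      rw [pow_add, hrm]
      ring
    have h2 : ω ^ (r ^ (m + k)) = ω ^ (-(r ^ k : ℤ)) := by
      rw [← h1, zpow_natCast]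
    rw [h2]
    have h3 : ω ^ (-(r ^ k : ℤ)) * ω ^ ((r ^ k : ℕ) : ℤ) = 1 := by
      rw [← zpow_add₀ hω0]; simp
    rw [zpow_natCast] at h3
    linear_combination -h3
  -- compute the second half product
  have hS : ∏ k ∈ Finset.range m, (1 - ω ^ (r ^ (m + k)))
      = (-1) ^ m * ω ^ (-(∑ k ∈ Finset.range m, (r ^ k : ℤ))) * α := by
    calc ∏ k ∈ Finset.range m, (1 - ω ^ (r ^ (m + k)))
        = ∏ k ∈ Finset.range m, (-(ω ^ (-(r ^ k : ℤ))) * (1 - ω ^ (r ^ k))) := by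
          exact Finset.prod_congr rfl fun k _ => hhalf k
      _ = (∏ k ∈ Finset.range m, -(ω ^ (-(r ^ k : ℤ)))) * ∏ k ∈ Finset.range m, (1 - ω ^ (r ^ k)) :=
          Finset.prod_mul_distrib
      _ = (-1) ^ m * ω ^ (-(∑ k ∈ Finset.range m, (r ^ k : ℤ))) * α := by
          rw [hα]
          congr 1
          have hzsum : ∀ (s : Finset ℕ) (f : ℕ → ℤ),
              ∏ k ∈ s, ω ^ (f k) = ω ^ (∑ k ∈ s, f k) := by
            intro s f
            induction s using Finset.cons_induction with
            | empty => simp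
            | cons a s ha ih => rw [Finset.prod_cons, Finset.sum_cons, zpow_add₀ hω0, ih]
          calc ∏ k ∈ Finset.range m, -(ω ^ (-(r ^ k : ℤ)))
              = ∏ k ∈ Finset.range m, ((-1) * ω ^ (-(r ^ k : ℤ))) := by
                simp only [neg_one_mul]
            _ = ((-1 : ℂ) ^ m) * ∏ k ∈ Finset.range m, ω ^ (-(r ^ k : ℤ)) := by
                rw [Finset.prod_mul_distrib, Finset.prod_const, Finset.card_range]
            _ = (-1) ^ m * ω ^ (-(∑ k ∈ Finset.range m, (r ^ k : ℤ))) := by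
                rw [hzsum, ← Finset.sum_neg_distrib]
  -- hence α² = (-1)^m ω^S p
  set S : ℤ := ∑ k ∈ Finset.range m, (r ^ k : ℤ) with hSdef
  have halpha2 : α ^ 2 = (-1) ^ m * ω ^ S * (p : ℂ) := by
    have h := hsplit
    rw [hS] at h
    have hωS : ω ^ (-S) * ω ^ S = 1 := by rw [← zpow_add₀ hω0]; simp
    have : (-1 : ℂ) ^ m * (-1 : ℂ) ^ m = 1 := by
      rw [← pow_add, show m + m = 2 * m by ring, pow_mul]
      norm_num
    calc α ^ 2 = ((-1:ℂ) ^ m * (-1:ℂ) ^ m) * (ω ^ (-S) * ω ^ S) * α ^ 2 := by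
          rw [this, hωS]; ring
      _ = (-1) ^ m * ω ^ S * (α * ((-1) ^ m * ω ^ (-S) * α)) := by ring
      _ = (-1) ^ m * ω ^ S * (p : ℂ) := by rw [← h]
  -- the exponent 2 * lam + S is divisible by p
  have hexp : ω ^ (2 * lam + S) = 1 := by
    apply (hprim.zpow_eq_one_iff_dvd _).mpr
    have h1 : ((2 * lam + S : ℤ) : ZMod p) = 0 := by
      have hgeom : (S : ZMod p) * ((r : ZMod p) - 1) = (r : ZMod p) ^ m - 1 := by
        have := geom_sum_mul ((r : ZMod p)) m
        rw [hSdef]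
        push_cast
        linear_combination this
      have hlam' : ((lam : ZMod p)) * ((r : ZMod p) - 1) = 1 := by
        have := (ZMod.intCast_eq_intCast_iff _ _ _).mpr hlam
        push_cast at this
        exact this
      have hS0 : (S : ZMod p) = (S : ZMod p) * (((lam : ZMod p)) * ((r : ZMod p) - 1)) := by
        rw [hlam', mul_one]
      push_cast
      rw [hrm] at hgeom
      calc 2 * (lam : ZMod p) + (S : ZMod p)
          = 2 * (lam : ZMod p) + (S : ZMod p) * (((lam : ZMod p)) * ((r : ZMod p) - 1)) := by
            rw [← hS0]
        _ = 2 * (lam : ZMod p) + (lam : ZMod p) * ((S : ZMod p) * ((r : ZMod p) - 1)) := by ring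
        _ = 2 * (lam : ZMod p) + (lam : ZMod p) * (-1 - 1) := by rw [hgeom]
        _ = 0 := by ring
    exact_mod_cast (ZMod.intCast_zmod_eq_zero_iff_dvd _ _).mp h1
  -- conclude
  have hpow2 : (ω ^ lam) ^ 2 = ω ^ (2 * lam) := by
    rw [← zpow_natCast (ω ^ lam) 2, ← zpow_mul, mul_comm]
    norm_num
  have hfin : (ω ^ lam * α) ^ 2 = ω ^ (2 * lam) * α ^ 2 := by
    rw [mul_pow, hpow2]
  rw [hfin, halpha2, ← mul_assoc]
  have : ω ^ (2 * lam) * ((-1:ℂ) ^ m * ω ^ S) = (-1:ℂ) ^ m := by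
    rw [show ω ^ (2*lam) * ((-1:ℂ)^m * ω ^ S) = ((-1:ℂ)^m) * (ω ^ (2*lam) * ω ^ S) by ring,
      ← zpow_add₀ hω0, hexp, mul_one]
  rw [this]
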